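/- Let (ν,λ) satisfy 0 < ν < 1 and 2√ν ≤ λ < 1 + ν, and let y_c := −(λ + √(λ²−4ν))/(2ν). Then for all y with y_c ≤ y < −1, the coefficient νy(y(1−λ²−ν²) − 2λ) (the coefficient of x² in H(x,y)) is nonzero. -/
import Mathlib


theorem stmt2 (v l : ℝ) (hv0 : 0 < v) (hv1 : v < 1)
    (hl1 : 2*Real.sqrt v ≤ l) (hl2 : l < 1 + v) :
    ∀ y : ℝ, -(l + Real.sqrt (l^2 - 4*v))/(2*v) ≤ y → y < -1 →
      v*y*(y*(1 - l^2 - v^2) - 2*l) ≠ 0 := by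
  intro y hy1 hy2 h
  have hvs : 0 < Real.sqrt v := Real.sqrt_pos.mpr hv0
  have hl0 : 0 < l := lt_of_lt_of_le (by positivity) hl1
  have hsq : 0 ≤ l^2 - 4*v := by
    nlinarith [Real.sq_sqrt hv0.le, Real.sqrt_nonneg v]
  set s := Real.sqrt (l^2 - 4*v) with hs
  have hs0 : 0 ≤ s := Real.sqrt_nonneg _
  have hs2 : s^2 = l^2 - 4*v := Real.sq_sqrt hsq
  have hsl : s < 1 - v := by nlinarith
  have hy0 : y < 0 := by linarith
  have key : y*(1 - l^2 - v^2) - 2*l = 0 := by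
    rcases mul_eq_zero.mp h with h' | h'
    · rcases mul_eq_zero.mp h' with h'' | h''
      · exact absurd h'' (ne_of_gt hv0)
      · exact absurd h'' (ne_of_lt hy0)
    · exact h'
  have h2v : -(l + s) ≤ y * (2*v) := by
    rw [div_le_iff₀ (by linarith)] at hy1
    linarith
  rcases le_or_gt 0 (1 - l^2 - v^2) with hA | hA
  · nlinarith [mul_nonneg (le_of_lt (neg_pos.mpr hy0)) hA]
  · have hls : l * s < 1 - v^2 := by nlinarith
    have hlsp : 0 < l + s := by linarith
    nlinarith [mul_lt_mul_of_pos_left hA (show (0:ℝ) < -(2*v*y) by nlinarith),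
      mul_pos hlsp (show 0 < 1 - v^2 - l*s by linarith)]
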